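/- Let A be a real m×m matrix, λ ≥ 0, κ > 0, and let β, β̂ ∈ ℝᵐ. Let T = {j : β_j ≠ 0} and s = Card(T) ≥ 1. Assume: (i) ‖A(β̂ − β)‖_∞ ≤ 2λ; (ii) ‖β̂‖₁ ≤ ‖β‖₁; and (iii) (restricted eigenvalue) for every h ∈ ℝᵐ with ‖h_{T^c}‖₁ ≤ ‖h_T‖₁ one has hᵀ A h ≥ κ² ‖h‖₂². Then (β̂ − β)ᵀ A (β̂ − β) ≤ 16 λ² s / κ² and ‖β̂ − β‖₁ ≤ 8 λ s / κ². -/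

import Mathlib

open Matrix Finset

/-- Let `A` be a real `m × m` matrix, `λ ≥ 0`, `κ > 0`, and let
`β, β̂ ∈ ℝᵐ`.  Let `T = {j : β_j ≠ 0}` and `s = Card(T) ≥ 1`.  Assume:
(i) `‖A(β̂ − β)‖_∞ ≤ 2λ`; (ii) `‖β̂‖₁ ≤ ‖β‖₁`; and (iii) (restricted eigenvalue) for every
`h` with `‖h_{T^c}‖₁ ≤ ‖h_T‖₁` one has `hᵀ A h ≥ κ² ‖h‖₂²`.  Then
`(β̂ − β)ᵀ A (β̂ − β) ≤ 16 λ² s / κ²` and `‖β̂ − β‖₁ ≤ 8 λ s / κ²`. -/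
theorem stmt_16 {m : ℕ} (A : Matrix (Fin m) (Fin m) ℝ) (lam κ : ℝ)
    (hlam : 0 ≤ lam) (hκ : 0 < κ) (β βhat : Fin m → ℝ)
    (T : Finset (Fin m)) (hT : T = Finset.univ.filter (fun j => β j ≠ 0))
    (s : ℕ) (hs : s = T.card) (hs1 : 1 ≤ s)
    (h1 : ∀ i, |A.mulVec (βhat - β) i| ≤ 2 * lam)
    (h2 : ∑ j, |βhat j| ≤ ∑ j, |β j|)
    (hRE : ∀ h : Fin m → ℝ, ∑ j ∈ Tᶜ, |h j| ≤ ∑ j ∈ T, |h j| →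
      κ ^ 2 * ∑ j, h j ^ 2 ≤ h ⬝ᵥ A.mulVec h) :
    (βhat - β) ⬝ᵥ A.mulVec (βhat - β) ≤ 16 * lam ^ 2 * s / κ ^ 2 ∧
      ∑ j, |βhat j - β j| ≤ 8 * lam * s / κ ^ 2 := by
  set h : Fin m → ℝ := βhat - β with hh
  have hhj : ∀ j, h j = βhat j - β j := fun j => rfl
  -- β vanishes off T
  have hβ0 : ∀ j ∈ Tᶜ, β j = 0 := by
    intro j hj
    simp only [hT, Finset.mem_compl, Finset.mem_filter, Finset.mem_univ, true_and,
      not_not] at hj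
    exact hj
  -- cone condition
  have hsplit : ∀ f : Fin m → ℝ, ∑ j ∈ T, f j + ∑ j ∈ Tᶜ, f j = ∑ j, f j :=
    fun f => Finset.sum_add_sum_compl T f
  have hcompl_hat : ∑ j ∈ Tᶜ, |h j| = ∑ j ∈ Tᶜ, |βhat j| := by
    refine Finset.sum_congr rfl fun j hj => ?_
    rw [hhj, hβ0 j hj, sub_zero]
  have htri : ∑ j ∈ T, |β j| ≤ ∑ j ∈ T, |βhat j| + ∑ j ∈ T, |h j| := by
    rw [← Finset.sum_add_distrib]
    refine Finset.sum_le_sum fun j _ => ?_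
    have := abs_sub_abs_le_abs_sub (β j) (βhat j)
    rw [abs_sub_comm] at this
    rw [hhj]; linarith
  have hβcompl : ∑ j ∈ Tᶜ, |β j| = 0 := by
    refine Finset.sum_eq_zero fun j hj => by rw [hβ0 j hj, abs_zero]
  have cone : ∑ j ∈ Tᶜ, |h j| ≤ ∑ j ∈ T, |h j| := by
    have e1 := hsplit (fun j => |βhat j|)
    have e2 := hsplit (fun j => |β j|)
    rw [hcompl_hat]
    linarith
  set tT : ℝ := ∑ j ∈ T, |h j| with htT
  have htT0 : 0 ≤ tT := Finset.sum_nonneg fun j _ => abs_nonneg _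
  set L1 : ℝ := ∑ j, |h j| with hL1
  have hL1tT : L1 ≤ 2 * tT := by
    have := hsplit (fun j => |h j|)
    rw [hL1, ← this]; linarith
  set E : ℝ := ∑ j, h j ^ 2 with hE
  have hE0 : 0 ≤ E := Finset.sum_nonneg fun j _ => sq_nonneg _
  set Q : ℝ := h ⬝ᵥ A.mulVec h with hQ
  have hREh : κ ^ 2 * E ≤ Q := hRE h cone
  -- Q ≤ 2 λ L1
  have hQL1 : Q ≤ 2 * lam * L1 := by
    rw [hQ, dotProduct]
    calc ∑ j, h j * A.mulVec h j ≤ ∑ j, |h j| * (2 * lam) := by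
          refine Finset.sum_le_sum fun j _ => ?_
          calc h j * A.mulVec h j ≤ |h j * A.mulVec h j| := le_abs_self _
            _ = |h j| * |A.mulVec h j| := abs_mul _ _
            _ ≤ |h j| * (2 * lam) := by
                exact mul_le_mul_of_nonneg_left (h1 j) (abs_nonneg _)
      _ = 2 * lam * L1 := by rw [hL1, ← Finset.sum_mul]; ring
  -- Cauchy-Schwarz on T
  have hcs : tT ^ 2 ≤ (s : ℝ) * E := by
    have h1' : tT ^ 2 ≤ (T.card : ℝ) * ∑ j ∈ T, |h j| ^ 2 :=
      sq_sum_le_card_mul_sum_sq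
    have h2' : ∑ j ∈ T, |h j| ^ 2 ≤ E := by
      rw [hE]
      calc ∑ j ∈ T, |h j| ^ 2 = ∑ j ∈ T, h j ^ 2 := by
            exact Finset.sum_congr rfl fun j _ => sq_abs _
        _ ≤ ∑ j, h j ^ 2 := Finset.sum_le_sum_of_subset_of_nonneg
            (Finset.subset_univ T) fun j _ _ => sq_nonneg _
    calc tT ^ 2 ≤ (T.card : ℝ) * ∑ j ∈ T, |h j| ^ 2 := h1'
      _ ≤ (s : ℝ) * E := by
          rw [hs]
          exact mul_le_mul_of_nonneg_left h2' (Nat.cast_nonneg _)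
  have hsR : (1 : ℝ) ≤ (s : ℝ) := by exact_mod_cast hs1
  -- key: κ² tT ≤ 4 λ s
  have hkey : κ ^ 2 * tT ≤ 4 * lam * s := by
    have hs0 : (0:ℝ) ≤ (s:ℝ) := by linarith
    have hA := mul_le_mul_of_nonneg_left hcs (le_of_lt (pow_pos hκ 2))
    have hB := mul_le_mul_of_nonneg_left hREh hs0
    have hC := mul_le_mul_of_nonneg_left hQL1 hs0
    have hD := mul_le_mul_of_nonneg_left hL1tT
      (mul_nonneg (by linarith : (0:ℝ) ≤ 2*lam) hs0)
    have hq : κ ^ 2 * tT ^ 2 ≤ 4 * lam * (s : ℝ) * tT := by nlinarith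
    rcases eq_or_lt_of_le htT0 with h0 | h0
    · rw [← h0, mul_zero]
      positivity
    · nlinarith
  have hκ2 : (0 : ℝ) < κ ^ 2 := pow_pos hκ 2
  have hgoal1 : (βhat - β) ⬝ᵥ A.mulVec (βhat - β) = Q := rfl
  have hgoal2 : ∑ j, |βhat j - β j| = L1 := rfl
  constructor
  · rw [le_div_iff₀ hκ2]
    nlinarith [mul_le_mul_of_nonneg_left hkey hlam, mul_le_mul_of_nonneg_left hQL1 hκ2.le,
      mul_le_mul_of_nonneg_left hL1tT (mul_nonneg (by linarith : (0:ℝ) ≤ 2*lam) hκ2.le)]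
  · rw [hgoal2, le_div_iff₀ hκ2]
    nlinarith [mul_le_mul_of_nonneg_left hL1tT hκ2.le]
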